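/- arXiv:1301.5078 — 6 statements merged into one kernel-verified Lean document; each statement's English description precedes it below -/
import Mathlib

section
/- Let L > 0 and Q > 0, and let f be analytic on the open disk {z ∈ ℂ : |z| < e} with |f(z)| ≤ L for all |z| < e. Suppose |f(z₀)| ≥ 1/Q for every z₀ with |z₀| = 1. Then f(z) ≠ 0 whenever 1 ≤ |z| < 1 + (e−1)/(QL+1). -/
open Complex Filter
open scoped ComplexConjugate Topology

noncomputable section

def cmvZeta (n : ℕ) (z : ℂ) : ℂ := if Odd n then z else 1

def enorm2 (v : ℂ × ℂ) : ℝ := Real.sqrt (‖v.1‖ ^ 2 + ‖v.2‖ ^ 2)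

def IsJostSolution (α : ℕ → ℂ) (F : ℂ → ℕ → ℂ × ℂ) : Prop :=
  (∀ z : ℂ, ∃ M : ℝ, ∀ k : ℕ, enorm2 (F z k) ≤ M) ∧
  ∀ (z : ℂ) (k : ℕ),
    Summable (fun n : ℕ => ‖α (k + 1 + n) * cmvZeta (k + 1 + n) z * (F z (k + 1 + n)).2‖) ∧
    Summable (fun n : ℕ => ‖z ^ n * conj (α (k + 1 + n)) * cmvZeta (k + 1) z * (F z (k + 1 + n)).1‖) ∧
    (F z k).1 = 1 - ∑' n : ℕ, α (k + 1 + n) * cmvZeta (k + 1 + n) z * (F z (k + 1 + n)).2 ∧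
    (F z k).2 = - ∑' n : ℕ, z ^ n * conj (α (k + 1 + n)) * cmvZeta (k + 1) z * (F z (k + 1 + n)).1

def SuperExpDecay (γ C : ℝ) (α : ℕ → ℂ) : Prop :=
  ∀ n : ℕ, 1 ≤ n → ‖α n‖ ≤ C * Real.exp (-(n : ℝ) ^ γ)

def MemB0 (γ C Q : ℝ) (α : ℕ → ℂ) : Prop :=
  (∀ k : ℕ, 1 ≤ k → ‖α k‖ < 1) ∧
  SuperExpDecay γ C α ∧
  1 / Q ≤ ∏' j : ℕ, (1 - ‖α (j + 1)‖)

def jostPi (F : ℂ → ℕ → ℂ × ℂ) (z : ℂ) : ℂ := (F z 0).1 - (F z 0).2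

def HasZeroOrder (f : ℂ → ℂ) (w : ℂ) (m : ℕ) : Prop :=
  ∃ g : ℂ → ℂ, AnalyticAt ℂ g w ∧ g w ≠ 0 ∧ ∀ᶠ x in 𝓝 w, f x = (x - w) ^ m * g x

def CMVStep (α : ℕ → ℂ) (z : ℂ) (k : ℕ) (prev cur : ℂ × ℂ) : Prop :=
  if Odd k then
    cur.1 = (α k * prev.1 + z * prev.2) / ((Real.sqrt (1 - ‖α k‖ ^ 2) : ℝ) : ℂ) ∧
    cur.2 = (prev.1 / z + conj (α k) * prev.2) / ((Real.sqrt (1 - ‖α k‖ ^ 2) : ℝ) : ℂ)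
  else
    cur.1 = (conj (α k) * prev.1 + prev.2) / ((Real.sqrt (1 - ‖α k‖ ^ 2) : ℝ) : ℂ) ∧
    cur.2 = (prev.1 + α k * prev.2) / ((Real.sqrt (1 - ‖α k‖ ^ 2) : ℝ) : ℂ)

end

theorem no_zeros_in_annulus (L Q : ℝ) (hL : 0 < L) (hQ : 0 < Q) (f : ℂ → ℂ)
    (hf : DifferentiableOn ℂ f (Metric.ball (0 : ℂ) (Real.exp 1)))
    (hbd : ∀ z : ℂ, ‖z‖ < Real.exp 1 → ‖f z‖ ≤ L)
    (hlow : ∀ z : ℂ, ‖z‖ = 1 → 1 / Q ≤ ‖f z‖) :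
    ∀ z : ℂ, 1 ≤ ‖z‖ → ‖z‖ < 1 + (Real.exp 1 - 1) / (Q * L + 1) →
      f z ≠ 0 := by
  intro z hz1 hz2 hf0
  set e := Real.exp 1 with he
  set r := ‖z‖ with hr
  have hQL : 0 < Q * L := mul_pos hQ hL
  have he2 : (2:ℝ) ≤ e := by
    have := Real.add_one_le_exp (1:ℝ); rw [he]; linarith
  have hre : r < e := by
    have h1 : (e - 1) / (Q * L + 1) ≤ e - 1 := by
      apply div_le_self <;> linarith
    linarith
  -- key inequality: Q*L*(r-1) < e - r
  have hkey : Q * L * (r - 1) < e - r := by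
    have h : r - 1 < (e - 1) / (Q * L + 1) := by linarith
    rw [lt_div_iff₀ (by linarith : (0:ℝ) < Q * L + 1)] at h
    nlinarith [h]
  have hρ0 : 0 ≤ Q * L * (r - 1) := by
    have : 0 ≤ r - 1 := by linarith
    positivity
  set ρ := (Q * L * (r - 1) + (e - r)) / 2 with hρ
  have hρpos : 0 < ρ := by rw [hρ]; linarith
  have hρlt : ρ < e - r := by rw [hρ]; linarith
  have hQLρ : Q * L * (r - 1) < ρ := by rw [hρ]; linarith
  -- derivative bound on closedBall 0 r
  have hderiv : ∀ w ∈ Metric.closedBall (0:ℂ) r, ‖deriv f w‖ ≤ L / ρ := by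
    intro w hw
    have hwr : ‖w‖ ≤ r := by
      simpa [Complex.dist_eq] using hw
    have hsub : Metric.closedBall w ρ ⊆ Metric.ball (0:ℂ) e := by
      intro x hx
      simp only [Metric.mem_closedBall, Metric.mem_ball, Complex.dist_eq, sub_zero] at hx ⊢
      calc ‖x‖ = ‖x - w + w‖ := by ring_nf
        _ ≤ ‖x - w‖ + ‖w‖ := norm_add_le _ _
        _ ≤ ρ + r := by simpa using add_le_add hx hwr
        _ < e := by linarith
    have hdc : DiffContOnCl ℂ f (Metric.ball w ρ) := by
      apply DifferentiableOn.diffContOnCl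
      apply hf.mono
      rw [closure_ball w hρpos.ne']
      exact hsub
    refine Complex.norm_deriv_le_of_forall_mem_sphere_norm_le hρpos hdc fun x hx => ?_
    apply hbd
    have : x ∈ Metric.closedBall w ρ := Metric.sphere_subset_closedBall hx
    simpa [Complex.dist_eq] using hsub this
  -- mean value inequality
  have hzne : z ≠ 0 := by
    intro h
    rw [hr, h] at hz1; norm_num at hz1
  have hrpos : (0:ℝ) < r := lt_of_lt_of_le one_pos hz1
  set z₀ : ℂ := z / (r : ℂ) with hz₀
  have hz₀abs : ‖z₀‖ = 1 := by
    rw [hz₀, norm_div, Complex.norm_real, Real.norm_eq_abs, abs_of_pos hrpos, div_self hrpos.ne']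
  have hz₀mem : z₀ ∈ Metric.closedBall (0:ℂ) r := by
    simp [Complex.dist_eq, hz₀abs]; linarith
  have hzmem : z ∈ Metric.closedBall (0:ℂ) r := by
    simp [Complex.dist_eq]; exact le_of_eq hr.symm
  have hdiff : ∀ x ∈ Metric.closedBall (0:ℂ) r, DifferentiableAt ℂ f x := by
    intro x hx
    apply hf.differentiableAt
    apply Metric.isOpen_ball.mem_nhds
    have : ‖x‖ ≤ r := by simpa [Complex.dist_eq] using hx
    simp only [Metric.mem_ball, Complex.dist_eq, sub_zero]
    linarith
  have hmv := (convex_closedBall (0:ℂ) r).norm_image_sub_le_of_norm_deriv_le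
    hdiff hderiv hzmem hz₀mem
  have hdist : ‖z₀ - z‖ = r - 1 := by
    have : z₀ - z = z * ((r:ℂ)⁻¹ - 1) := by
      rw [hz₀]; ring
    rw [this]
    rw [norm_mul]
    have h1r : (1:ℝ) / r ≤ 1 := by
      rw [div_le_one hrpos]; exact hz1
    have : ‖(r:ℂ)⁻¹ - 1‖ = 1 - r⁻¹ := by
      rw [show ((r:ℂ)⁻¹ - 1) = ((r⁻¹ - 1 : ℝ) : ℂ) by push_cast; ring]
      rw [Complex.norm_real, Real.norm_eq_abs, abs_of_nonpos (by
        rw [sub_nonpos, inv_le_one_iff₀]; right; exact hz1)]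
      ring
    rw [this]
    have : ‖z‖ = r := rfl
    rw [this]
    field_simp
  rw [hf0, sub_zero, hdist] at hmv
  have hlower : 1 / Q ≤ ‖f z₀‖ := hlow z₀ hz₀abs
  have hle : 1 / Q ≤ L / ρ * (r - 1) := le_trans hlower hmv
  rw [div_mul_eq_mul_div, div_le_div_iff₀ hQ hρpos] at hle
  nlinarith [hle, hQLρ]
end

section
/- Let p ≥ 1 and B ≥ 0. There exists a constant A₁ ≥ 0, depending only on p and B, such that for every entire function f with f(0) = 1 and log|f(z)| ≤ B + (log(2|z|²))^p for all |z| ≥ 1, and for every r ≥ 1, the number of zeros of f (counted with multiplicities) in the open disk {z : |z| < r} is at most A₁ + (log(r⁴))^p / 2. -/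
open Complex Filter
open scoped ComplexConjugate Topology

private lemma div_lemma {f : ℂ → ℂ} (hf : Differentiable ℂ f) (a : ℂ) (ha : f a = 0) :
    ∃ g : ℂ → ℂ, Differentiable ℂ g ∧ ∀ z, f z = (z - a) * g z := by
  refine ⟨dslope f a, ?_, fun z => ?_⟩
  · intro b
    rcases eq_or_ne b a with rfl | hb
    · rcases (hf.analyticAt b) with ⟨q, hq⟩
      exact hq.has_fpower_series_dslope_fslope.analyticAt.differentiableAt
    · exact (differentiableAt_dslope_of_ne hb).2 (hf b)
  · have h := sub_smul_dslope f a z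
    rw [ha, sub_zero] at h
    rw [← h]
    simp [smul_eq_mul]

lemma factor_out : ∀ (M : ℕ) (f : ℂ → ℂ), Differentiable ℂ f →
    ∀ zs : Fin M → ℂ,
    (∀ w : ℂ, ∃ m : ℕ, (Finset.univ.filter (fun n => zs n = w)).card ≤ m ∧ HasZeroOrder f w m) →
    ∃ g : ℂ → ℂ, Differentiable ℂ g ∧ ∀ z, f z = (∏ n, (z - zs n)) * g z := by
  intro M
  induction M with
  | zero => exact fun f hf zs _ => ⟨f, hf, by simp⟩
  | succ M ih =>
    intro f hf zs hyp
    set a := zs (Fin.last M) with ha_def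
    have hfa : f a = 0 := by
      obtain ⟨m, hcard, g₀, hg₀a, hg₀ne, hev⟩ := hyp a
      have hlast : Fin.last M ∈ Finset.univ.filter (fun n => zs n = a) := by
        exact Finset.mem_filter.mpr ⟨Finset.mem_univ _, ha_def.symm⟩
      have hm1 : 1 ≤ m := le_trans (Finset.card_pos.mpr ⟨_, hlast⟩) hcard
      have := hev.self_of_nhds
      simpa [zero_pow (by omega : m ≠ 0)] using this
    obtain ⟨g₁, hg₁, hfg₁⟩ := div_lemma hf a hfa
    have hyp' : ∀ w : ℂ, ∃ m : ℕ,
        (Finset.univ.filter (fun n : Fin M => zs n.castSucc = w)).card ≤ m ∧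
        HasZeroOrder g₁ w m := by
      intro w
      obtain ⟨m, hcard, g₀, hg₀a, hg₀ne, hev⟩ := hyp w
      by_cases hw : w = a
      · subst hw
        have hlast : Fin.last M ∈ Finset.univ.filter (fun n => zs n = a) := by
          exact Finset.mem_filter.mpr ⟨Finset.mem_univ _, ha_def.symm⟩
        have hm1 : 1 ≤ m := le_trans (Finset.card_pos.mpr ⟨_, hlast⟩) hcard
        refine ⟨m - 1, ?_, g₀, hg₀a, hg₀ne, ?_⟩
        · have hsub : (Finset.univ.filter (fun n : Fin M => zs n.castSucc = a)).image
              Fin.castSucc ⊆ (Finset.univ.filter (fun n : Fin (M+1) => zs n = a)).erase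
              (Fin.last M) := by
            intro x hx
            simp only [Finset.mem_image, Finset.mem_filter, Finset.mem_univ, true_and] at hx
            obtain ⟨n, hn, rfl⟩ := hx
            refine Finset.mem_erase.mpr ⟨(Fin.castSucc_lt_last n).ne, ?_⟩
            simp [hn]
          calc (Finset.univ.filter (fun n : Fin M => zs n.castSucc = a)).card
              = ((Finset.univ.filter (fun n : Fin M => zs n.castSucc = a)).image
                Fin.castSucc).card :=
                (Finset.card_image_of_injective _ (Fin.castSucc_injective M)).symm
            _ ≤ ((Finset.univ.filter (fun n : Fin (M+1) => zs n = a)).erase (Fin.last M)).card :=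
                Finset.card_le_card hsub
            _ = (Finset.univ.filter (fun n : Fin (M+1) => zs n = a)).card - 1 :=
                Finset.card_erase_of_mem hlast
            _ ≤ m - 1 := Nat.sub_le_sub_right hcard 1
        · have hpunct : ∀ᶠ x in 𝓝[≠] a, g₁ x = (x - a) ^ (m - 1) * g₀ x := by
            filter_upwards [eventually_nhdsWithin_of_eventually_nhds hev,
              self_mem_nhdsWithin] with x hx hxw
            have key : (x - a) * ((x - a) ^ (m - 1) * g₀ x) = (x - a) ^ m * g₀ x := by
              rw [← mul_assoc, mul_comm (x - a) ((x - a) ^ (m - 1)), ← pow_succ,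
                Nat.sub_add_cancel hm1]
            exact mul_left_cancel₀ (sub_ne_zero.mpr hxw)
              (by rw [← hfg₁ x, hx, key])
          have hata : g₁ a = (a - a) ^ (m - 1) * g₀ a := by
            have h1 : Tendsto g₁ (𝓝[≠] a) (𝓝 (g₁ a)) :=
              (hg₁ a).continuousAt.continuousWithinAt
            have h2 : Tendsto (fun x => (x - a) ^ (m - 1) * g₀ x) (𝓝[≠] a)
                (𝓝 ((a - a) ^ (m - 1) * g₀ a)) :=
              (((continuousAt_id.sub continuousAt_const).pow _).mul
                hg₀a.continuousAt).continuousWithinAt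
            exact tendsto_nhds_unique (h1.congr' hpunct) h2
          filter_upwards [hev] with x hx
          rcases eq_or_ne x a with rfl | hxw
          · exact hata
          · have key : (x - a) * ((x - a) ^ (m - 1) * g₀ x) = (x - a) ^ m * g₀ x := by
              rw [← mul_assoc, mul_comm (x - a) ((x - a) ^ (m - 1)), ← pow_succ,
                Nat.sub_add_cancel hm1]
            exact mul_left_cancel₀ (sub_ne_zero.mpr hxw)
              (by rw [← hfg₁ x, hx, key])
      · refine ⟨m, ?_, fun x => g₀ x / (x - a), ?_, ?_, ?_⟩
        · refine le_trans (Finset.card_le_card_of_injOn Fin.castSucc ?_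
            ((Fin.castSucc_injective M).injOn)) hcard
          intro n hn
          simp only [Finset.coe_filter, Finset.mem_coe, Finset.mem_filter, Finset.mem_univ, true_and, Set.mem_setOf_eq] at hn ⊢
          exact hn
        · exact hg₀a.div (analyticAt_id.sub analyticAt_const) (sub_ne_zero.mpr hw)
        · exact div_ne_zero hg₀ne (sub_ne_zero.mpr hw)
        · filter_upwards [hev, eventually_ne_nhds hw] with x hx hxa
          have hne : x - a ≠ 0 := sub_ne_zero.mpr hxa
          have hx' : (x - a) * g₁ x = (x - a) * ((x - w) ^ m * (g₀ x / (x - a))) := by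
            rw [← hfg₁ x, hx]
            field_simp
          exact mul_left_cancel₀ (sub_ne_zero.mpr hxa) hx'
    obtain ⟨g, hg, hgf⟩ := ih g₁ hg₁ _ hyp'
    refine ⟨g, hg, fun z => ?_⟩
    rw [hfg₁ z, hgf z, Fin.prod_univ_castSucc]
    ring

private lemma core_ineq (p B : ℝ) (hp : 1 ≤ p) (hB : 0 ≤ B) (f : ℂ → ℂ) (hf : Differentiable ℂ f)
    (hf0 : f 0 = 1)
    (hbound : ∀ z : ℂ, 1 ≤ ‖z‖ →
      Real.log (‖f z‖) ≤ B + (Real.log (2 * ‖z‖ ^ 2)) ^ p)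
    (s : ℝ) (hs : 1 ≤ s) (M : ℕ) (zs : Fin M → ℂ) (hzs : ∀ n, ‖zs n‖ < s)
    (hfac : ∃ g : ℂ → ℂ, Differentiable ℂ g ∧ ∀ z, f z = (∏ n, (z - zs n)) * g z) :
    2 * (M : ℝ) ≤ B + (Real.log (2 * ((Real.exp 2 + 1) * s) ^ 2)) ^ p := by
  obtain ⟨g, hg, hfg⟩ := hfac
  set K : ℝ := Real.exp 2 + 1 with hK
  set R : ℝ := K * s with hRdef
  have he2 : (0:ℝ) < Real.exp 2 := Real.exp_pos 2
  have hK1 : 1 < K := by simp [hK]; linarith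
  have hR1 : 1 ≤ R := by nlinarith
  have hRs : R - s = Real.exp 2 * s := by rw [hRdef, hK]; ring
  have hR0 : 0 < R := by linarith
  set c : ℝ := B + (Real.log (2 * R ^ 2)) ^ p with hc
  set D : ℝ := (Real.exp 2 * s) ^ M with hD
  have hD0 : 0 < D := pow_pos (by nlinarith) M
  -- bound g on the frontier
  have hfront : ∀ z ∈ frontier (Metric.ball (0:ℂ) R), ‖g z‖ ≤ Real.exp c / D := by
    intro z hz
    rw [frontier_ball (0:ℂ) hR0.ne'] at hz
    have hzR : ‖z‖ = R := by
      simpa [Complex.dist_eq] using (Metric.mem_sphere.mp hz)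
    have hfz : ‖f z‖ ≤ Real.exp c := by
      rcases le_or_gt (‖f z‖) 0 with h | h
      · exact h.trans (Real.exp_pos c).le
      · calc ‖f z‖ = Real.exp (Real.log (‖f z‖)) :=
            (Real.exp_log h).symm
          _ ≤ Real.exp c := by
            apply Real.exp_le_exp.mpr
            rw [hc]
            have := hbound z (by rw [hzR]; exact hR1)
            rwa [hzR] at this
    have hprod : D ≤ ∏ n, ‖z - zs n‖ := by
      have hconst : ∏ _n : Fin M, (Real.exp 2 * s) = D := by
        rw [hD]; simp
      rw [← hconst]
      apply Finset.prod_le_prod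
      · intro n _; nlinarith
      · intro n _
        have h1 : ‖z‖ - ‖zs n‖ ≤ ‖z - zs n‖ := by
          exact norm_sub_norm_le z (zs n)
        have h2 := hzs n
        rw [hzR] at h1
        linarith
    have key : D * ‖g z‖ ≤ Real.exp c := by
      calc D * ‖g z‖ ≤ (∏ n, ‖z - zs n‖) * ‖g z‖ :=
            mul_le_mul_of_nonneg_right hprod (norm_nonneg _)
        _ = ‖f z‖ := by
            rw [hfg z, norm_mul, norm_prod]
        _ ≤ Real.exp c := hfz
    rw [le_div_iff₀ hD0]
    linarith [key]
  have hg0 : ‖g 0‖ ≤ Real.exp c / D :=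
    Complex.norm_le_of_forall_mem_frontier_norm_le Metric.isBounded_ball hg.diffContOnCl
      hfront (subset_closure (Metric.mem_ball_self hR0))
  -- at zero
  have h0 : (∏ n, ‖zs n‖) * ‖g 0‖ = 1 := by
    have := hfg 0
    rw [hf0] at this
    have h2 : ‖(∏ n, ((0:ℂ) - zs n)) * g 0‖ = 1 := by rw [← this]; simp
    rw [norm_mul, norm_prod] at h2
    simpa using h2
  have hPle : (∏ n, ‖zs n‖) ≤ s ^ M := by
    have hconst : ∏ _n : Fin M, s = s ^ M := by simp
    rw [← hconst]
    apply Finset.prod_le_prod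
    · intro n _; exact norm_nonneg _
    · intro n _; exact (hzs n).le
  have hs0 : (0:ℝ) < s ^ M := pow_pos (by linarith) M
  have h1 : 1 ≤ s ^ M * (Real.exp c / D) := by
    calc (1:ℝ) = (∏ n, ‖zs n‖) * ‖g 0‖ := h0.symm
      _ ≤ s ^ M * (Real.exp c / D) := by
        apply mul_le_mul hPle ?_ (norm_nonneg _) hs0.le
        simpa using hg0
  have h1' : D ≤ s ^ M * Real.exp c := by
    rw [mul_div_assoc'] at h1
    exact (one_le_div hD0).mp h1
  have hexp : Real.exp 2 ^ M ≤ Real.exp c := by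
    have hDeq : D = Real.exp 2 ^ M * s ^ M := by rw [hD, mul_pow]
    rw [hDeq, mul_comm (s ^ M) (Real.exp c)] at h1'
    exact le_of_mul_le_mul_right h1' hs0
  rw [← Real.exp_nat_mul] at hexp
  have hfin := Real.exp_le_exp.mp hexp
  rw [hc] at hfin
  linarith

theorem zero_counting_bound (p B : ℝ) (hp : 1 ≤ p) (hB : 0 ≤ B) :
    ∃ A₁ : ℝ, 0 ≤ A₁ ∧
      ∀ f : ℂ → ℂ, Differentiable ℂ f → f 0 = 1 →
        (∀ z : ℂ, 1 ≤ ‖z‖ →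
          Real.log (‖f z‖) ≤ B + (Real.log (2 * ‖z‖ ^ 2)) ^ p) →
        ∀ r : ℝ, 1 ≤ r →
          ∀ (M : ℕ) (zs : Fin M → ℂ),
            (∀ n, ‖zs n‖ < r) →
            (∀ w : ℂ, ∃ m : ℕ,
              (Finset.univ.filter (fun n => zs n = w)).card ≤ m ∧ HasZeroOrder f w m) →
            (M : ℝ) ≤ A₁ + (Real.log (r ^ 4)) ^ p / 2 := by
  have he2 : (0:ℝ) < Real.exp 2 := Real.exp_pos 2
  have he2' : (1:ℝ) ≤ Real.exp 2 := by
    have := Real.add_one_le_exp (2:ℝ); linarith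
  set r₀ : ℝ := 2 * (Real.exp 2 + 1) ^ 2 with hr₀def
  have hr₀1 : (1:ℝ) ≤ r₀ := by rw [hr₀def]; nlinarith
  have hlogr₀ : 0 ≤ Real.log r₀ := Real.log_nonneg hr₀1
  refine ⟨B / 2 + (3 * Real.log r₀) ^ p / 2, ?_, ?_⟩
  · have : (0:ℝ) ≤ (3 * Real.log r₀) ^ p := Real.rpow_nonneg (by linarith) p
    linarith
  intro f hf hf0 hbound r hr M zs hzsr hmult
  set s : ℝ := max r r₀ with hsdef
  have hs : 1 ≤ s := le_trans hr (le_max_left r r₀)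
  have hs0 : (0:ℝ) < s := by linarith
  have hr₀s : r₀ ≤ s := le_max_right r r₀
  have hzs : ∀ n, ‖zs n‖ < s :=
    fun n => lt_of_lt_of_le (hzsr n) (le_max_left r r₀)
  have hfac := factor_out M f hf zs hmult
  have hcore := core_ineq p B hp hB f hf hf0 hbound s hs M zs hzs hfac
  -- simplify the log
  have harg : 2 * ((Real.exp 2 + 1) * s) ^ 2 = r₀ * s ^ 2 := by rw [hr₀def]; ring
  have hlogeq : Real.log (2 * ((Real.exp 2 + 1) * s) ^ 2)
      = Real.log r₀ + 2 * Real.log s := by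
    rw [harg, Real.log_mul (by linarith) (by positivity), Real.log_pow]
    push_cast
    ring
  have hlognn : 0 ≤ Real.log (2 * ((Real.exp 2 + 1) * s) ^ 2) := by
    rw [hlogeq]
    have := Real.log_nonneg hs
    linarith
  have hlogle : Real.log (2 * ((Real.exp 2 + 1) * s) ^ 2) ≤ 3 * Real.log s := by
    rw [hlogeq]
    have := Real.log_le_log (by linarith : (0:ℝ) < r₀) hr₀s
    linarith
  have hp0 : (0:ℝ) ≤ p := by linarith
  have hpow : (Real.log (2 * ((Real.exp 2 + 1) * s) ^ 2)) ^ p ≤ (3 * Real.log s) ^ p :=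
    Real.rpow_le_rpow hlognn hlogle hp0
  have hmain : 2 * (M:ℝ) ≤ B + (3 * Real.log s) ^ p := by linarith
  have hlogr4 : Real.log (r ^ 4) = 4 * Real.log r := by
    rw [Real.log_pow]; push_cast; ring
  have hlogr4nn : 0 ≤ Real.log (r ^ 4) := by
    rw [hlogr4]
    have := Real.log_nonneg hr
    linarith
  have hr4pow : (0:ℝ) ≤ (Real.log (r ^ 4)) ^ p := Real.rpow_nonneg hlogr4nn p
  rcases le_total r₀ r with hcase | hcase
  · -- s = r
    have hseq : s = r := max_eq_left hcase
    rw [hseq] at hmain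
    have hlr : 0 ≤ Real.log r := Real.log_nonneg hr
    have h34 : ((3:ℝ)/4) ^ p ≤ 3/4 := by
      calc ((3:ℝ)/4) ^ p ≤ ((3:ℝ)/4) ^ (1:ℝ) :=
            Real.rpow_le_rpow_of_exponent_ge (by norm_num) (by norm_num) hp
        _ = 3/4 := Real.rpow_one _
    have hsplit : (3 * Real.log r) ^ p = ((3:ℝ)/4) ^ p * (4 * Real.log r) ^ p := by
      rw [← Real.mul_rpow (by norm_num) (by linarith),
        show (3:ℝ)/4*(4*Real.log r) = 3*Real.log r by ring]
    have h4nn : (0:ℝ) ≤ (4 * Real.log r) ^ p := Real.rpow_nonneg (by linarith) p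
    have hb : (3 * Real.log r) ^ p ≤ (3/4) * (4 * Real.log r) ^ p := by
      rw [hsplit]
      exact mul_le_mul_of_nonneg_right h34 h4nn
    have := Real.rpow_nonneg (by linarith : (0:ℝ) ≤ 3 * Real.log r₀) p
    rw [hlogr4]
    linarith
  · -- s = r₀
    have hseq : s = r₀ := max_eq_right hcase
    rw [hseq] at hmain
    linarith
end

section
/- Let p ≥ 1 and B ≥ 0. There exists a constant A₂ ≥ 0, depending only on p and B, such that for every entire function f with f(0) = 1, with no zeros in the closed unit disk {z : |z| ≤ 1}, and with log|f(z)| ≤ B + (log(2|z|²))^p for all |z| ≥ 1, and for every R ≥ 2, one has Σ_{w : f(w)=0, |w| ≥ R} m(w)/|w| ≤ A₂·(log R)^p / R, where m(w) denotes the multiplicity of the zero w and the (countable) sum over all zeros of f of modulus at least R converges. -/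
open Complex Filter
open scoped ComplexConjugate Topology

lemma zero_order_eq_zero {f : ℂ → ℂ} {w : ℂ} {k : ℕ} (h : HasZeroOrder f w k)
    (hf : f w ≠ 0) : k = 0 := by
  obtain ⟨g, hg, hgw, hev⟩ := h
  by_contra hk
  have := hev.self_of_nhds
  simp [sub_self, zero_pow hk] at this
  exact hf this

lemma myDivOne {f : ℂ → ℂ} (hf : Differentiable ℂ f) {w : ℂ} {k : ℕ}
    (h : HasZeroOrder f w k) :
    ∃ g : ℂ → ℂ, Differentiable ℂ g ∧ g w ≠ 0 ∧ ∀ z, f z = (z - w) ^ k * g z := by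
  obtain ⟨h₀, han, hw0, hev⟩ := h
  classical
  refine ⟨fun z => if z = w then h₀ w else f z / (z - w) ^ k, ?_, by simp [hw0], ?_⟩
  · intro z
    rcases eq_or_ne z w with rfl | hz
    · -- eventually equals h₀
      have hE : (fun x => if x = z then h₀ z else f x / (x - z) ^ k) =ᶠ[𝓝 z] h₀ := by
        filter_upwards [hev] with x hx
        rcases eq_or_ne x z with rfl | hxz
        · simp
        · simp only [hxz, if_false, hx]
          field_simp [sub_ne_zero.mpr hxz]
      exact (han.differentiableAt.congr_of_eventuallyEq hE)
    · have hE : (fun x => if x = w then h₀ w else f x / (x - w) ^ k) =ᶠ[𝓝 z]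
          (fun x => f x / (x - w) ^ k) := by
        filter_upwards [isOpen_ne.mem_nhds hz] with x hx
        simp [hx]
      refine DifferentiableAt.congr_of_eventuallyEq ?_ hE
      exact ((hf z).div ((differentiableAt_id.sub_const w).pow k)
        (pow_ne_zero _ (sub_ne_zero.mpr hz)))
  · intro z
    rcases eq_or_ne z w with rfl | hz
    · have := hev.self_of_nhds
      rcases Nat.eq_zero_or_pos k with rfl | hk
      · simpa using this
      · simp [sub_self, zero_pow hk.ne', this]
    · simp only [hz, if_false]
      field_simp [pow_ne_zero _ (sub_ne_zero.mpr hz)]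

lemma myDivFinset {μ : ℂ → ℕ} (T : Finset ℂ) :
    ∀ f : ℂ → ℂ, Differentiable ℂ f → (∀ w ∈ T, HasZeroOrder f w (μ w)) →
    ∃ g : ℂ → ℂ, Differentiable ℂ g ∧
      ∀ z, f z = (∏ w ∈ T, (z - w) ^ μ w) * g z := by
  classical
  induction T using Finset.induction_on with
  | empty => exact fun f hf _ => ⟨f, hf, by simp⟩
  | @insert a T ha IH =>
    intro f hf hzo
    obtain ⟨g₁, hg₁, hg₁a, hfac⟩ := myDivOne hf (hzo a (Finset.mem_insert_self a T))
    have hg₁zo : ∀ w ∈ T, HasZeroOrder g₁ w (μ w) := by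
      intro w hw
      have hwa : w ≠ a := fun h => ha (h ▸ hw)
      obtain ⟨h, hhan, hhw, hev⟩ := hzo w (Finset.mem_insert_of_mem hw)
      refine ⟨fun x => h x / (x - a) ^ μ a, ?_, ?_, ?_⟩
      · exact hhan.div (((analyticAt_id.sub analyticAt_const).pow _))
          (pow_ne_zero _ (sub_ne_zero.mpr hwa))
      · simp only []
        exact div_ne_zero hhw (pow_ne_zero _ (sub_ne_zero.mpr hwa))
      · filter_upwards [hev, isOpen_ne.mem_nhds hwa] with x hx hxa
        have hpa : ((x : ℂ) - a) ^ μ a ≠ 0 := pow_ne_zero _ (sub_ne_zero.mpr hxa)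
        have : (x - a) ^ μ a * g₁ x = (x - w) ^ μ w * h x := by rw [← hfac x, hx]
        field_simp
        linear_combination this
    obtain ⟨g, hg, hgfac⟩ := IH g₁ hg₁ hg₁zo
    refine ⟨g, hg, fun z => ?_⟩
    rw [Finset.prod_insert ha, hfac z, hgfac z]; ring

lemma myCount (p B : ℝ) (hB : 0 ≤ B) {f : ℂ → ℂ} (hf : Differentiable ℂ f)
    (hf0 : f 0 = 1)
    {m : ℂ → ℕ} (hm : ∀ w, HasZeroOrder f w (m w))
    (T : Finset ℂ) {r : ℝ} (hr : 1 ≤ r)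
    (hgr : ∀ z : ℂ, ‖z‖ = 4 * r →
      Real.log (‖f z‖) ≤ B + (Real.log (32 * r ^ 2)) ^ p)
    (hT : ∀ w ∈ T, f w = 0 ∧ ‖w‖ ≤ r) :
    (∑ w ∈ T, (m w : ℝ)) * Real.log 3 ≤ B + (Real.log (32 * r ^ 2)) ^ p := by
  classical
  have hr0 : (0:ℝ) < r := lt_of_lt_of_le one_pos hr
  obtain ⟨g, hg, hfac⟩ := myDivFinset T f hf (fun w _ => hm w)
  set n : ℕ := ∑ w ∈ T, m w with hn
  set M : ℝ := Real.exp (B + (Real.log (32 * r ^ 2)) ^ p) with hM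
  have hM0 : 0 < M := Real.exp_pos _
  -- value at 0
  have hP0 : ‖∏ w ∈ T, ((0:ℂ) - w) ^ m w‖ ≤ r ^ n := by
    rw [norm_prod]
    simp only [norm_pow]
    rw [hn, ← Finset.prod_pow_eq_pow_sum]
    refine Finset.prod_le_prod (fun w _ => by positivity) (fun w hw => ?_)
    refine pow_le_pow_left₀ (norm_nonneg _) ?_ _
    simpa using (hT w hw).2
  have hP0ne : (∏ w ∈ T, ((0:ℂ) - w) ^ m w) ≠ 0 := by
    refine Finset.prod_ne_zero_iff.mpr (fun w hw => ?_)
    have hwne : w ≠ 0 := by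
      intro h; have := (hT w hw).1; rw [h, hf0] at this; exact one_ne_zero this
    exact pow_ne_zero _ (sub_ne_zero.mpr (Ne.symm hwne))
  -- on the sphere of radius 4r
  have hsphere : ∀ z ∈ frontier (Metric.ball (0:ℂ) (4*r)), ‖g z‖ ≤ M / (3*r) ^ n := by
    rw [frontier_ball (0:ℂ) (by positivity : 4*r ≠ 0)]
    intro z hz
    have hzabs : ‖z‖ = 4 * r := by
      simpa using hz
    have hPz : (3*r) ^ n ≤ ‖∏ w ∈ T, (z - w) ^ m w‖ := by
      rw [norm_prod]
      simp only [norm_pow]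
      rw [hn, ← Finset.prod_pow_eq_pow_sum]
      refine Finset.prod_le_prod (fun w _ => by positivity) (fun w hw => ?_)
      refine pow_le_pow_left₀ (by positivity) ?_ _
      have h1 : ‖w‖ ≤ r := (hT w hw).2
      have h2 : ‖z‖ ≤ ‖z - w‖ + ‖w‖ := by
        have h := norm_add_le (z - w) w
        simpa using h
      rw [hzabs] at h2
      linarith
    have hfz : ‖f z‖ ≤ M := by
      rcases eq_or_ne (f z) 0 with h0 | h0
      · simp [h0]; positivity
      · have := hgr z hzabs
        calc ‖f z‖ = Real.exp (Real.log (‖f z‖)) :=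
              (Real.exp_log (by simpa [norm_pos_iff] using h0)).symm
          _ ≤ M := Real.exp_le_exp.mpr this
    have hPzpos : (0:ℝ) < ‖∏ w ∈ T, (z - w) ^ m w‖ :=
      lt_of_lt_of_le (by positivity) hPz
    have heq : ‖f z‖ / ‖∏ w ∈ T, (z - w) ^ m w‖ = ‖g z‖ := by
      rw [hfac z, norm_mul, mul_comm, mul_div_assoc,
        div_self (ne_of_gt hPzpos), mul_one]
    rw [← heq]
    exact div_le_div₀ hM0.le hfz (by positivity) hPz
  have hg0 : ‖g 0‖ ≤ M / (3*r) ^ n :=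
    Complex.norm_le_of_forall_mem_frontier_norm_le Metric.isBounded_ball
      (hg.diffContOnCl) hsphere
      (subset_closure (Metric.mem_ball_self (by positivity)))
  -- combine
  have key : (1:ℝ) ≤ r ^ n * (M / (3*r) ^ n) := by
    have h1 : ‖∏ w ∈ T, ((0:ℂ) - w) ^ m w‖ * ‖g 0‖ = 1 := by
      rw [← norm_mul, ← hfac 0, hf0, norm_one]
    calc (1:ℝ) = ‖∏ w ∈ T, ((0:ℂ) - w) ^ m w‖ * ‖g 0‖ := h1.symm
      _ ≤ r ^ n * (M / (3*r) ^ n) :=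
          mul_le_mul hP0 hg0 (norm_nonneg _) (by positivity)
  have key2 : ((3:ℝ)*r) ^ n ≤ r ^ n * M := by
    have hpos : (0:ℝ) < (3*r) ^ n := by positivity
    rw [← mul_div_assoc] at key
    exact (one_le_div hpos).mp key
  have h3n : (3:ℝ) ^ n ≤ M := by
    have hrn : (0:ℝ) < r ^ n := by positivity
    rw [mul_pow, mul_comm ((3:ℝ) ^ n)] at key2
    exact le_of_mul_le_mul_left key2 hrn
  calc (∑ w ∈ T, (m w : ℝ)) * Real.log 3 = (n : ℝ) * Real.log 3 := by
        rw [hn]; push_cast; ring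
    _ = Real.log ((3:ℝ) ^ n) := by rw [Real.log_pow]
    _ ≤ Real.log M := Real.log_le_log (by positivity) h3n
    _ = B + (Real.log (32 * r ^ 2)) ^ p := Real.log_exp _

lemma mySeries (p : ℝ) (hp : 1 ≤ p) :
    ∃ D : ℝ, 0 ≤ D ∧ ∀ K : ℕ,
      ∑ k ∈ Finset.range K, ((1:ℝ)/2) ^ k * ((1:ℝ) + k) ^ p ≤ D := by
  have hp0 : 0 < p := lt_of_lt_of_le one_pos hp
  have hlog2 : (0:ℝ) < Real.log 2 := Real.log_pos one_lt_two
  set t : ℝ := 2 * p / Real.log 2 with htdef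
  have ht : 0 < t := by positivity
  have hs2 : Real.sqrt 2 = Real.exp (Real.log 2 * (1/2)) := by
    rw [Real.sqrt_eq_rpow, Real.rpow_def_of_pos two_pos]
  have hs2pos : (0:ℝ) < Real.sqrt 2 := by positivity
  refine ⟨t ^ p * Real.sqrt 2 * 4, by positivity, fun K => ?_⟩
  have hbound : ∀ k : ℕ, ((1:ℝ) + k) ^ p ≤ t ^ p * Real.sqrt 2 * Real.sqrt 2 ^ k := by
    intro k
    have hk1 : (0:ℝ) < 1 + k := by positivity
    have hlog : Real.log (1 + (k:ℝ)) ≤ (1 + k) / t + Real.log t - 1 := by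
      have h := Real.log_le_sub_one_of_pos (x := (1 + (k:ℝ)) / t) (by positivity)
      rw [Real.log_div (ne_of_gt hk1) (ne_of_gt ht)] at h
      linarith
    have hkey : Real.log (1 + (k:ℝ)) * p ≤
        Real.log t * p + (1 + (k:ℝ)) * (Real.log 2 / 2) := by
      have h2 : p * ((1 + (k:ℝ)) / t) = (1 + (k:ℝ)) * (Real.log 2 / 2) := by
        rw [htdef]; field_simp
      nlinarith [hlog, hp0]
    calc ((1:ℝ) + k) ^ p = Real.exp (Real.log (1 + (k:ℝ)) * p) := by
          rw [← Real.rpow_def_of_pos hk1]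
      _ ≤ Real.exp (Real.log t * p + (1 + (k:ℝ)) * (Real.log 2 / 2)) :=
          Real.exp_le_exp.mpr hkey
      _ = t ^ p * Real.sqrt 2 * Real.sqrt 2 ^ k := by
          rw [Real.exp_add, ← Real.rpow_def_of_pos ht, hs2]
          rw [mul_assoc, ← Real.exp_nat_mul, ← Real.exp_add]
          congr 2
          push_cast; ring
  have hhalf : Real.sqrt 2 / 2 < 1 := by
    rw [div_lt_one (by norm_num : (0:ℝ) < 2)]
    nlinarith [Real.sq_sqrt (by norm_num : (0:ℝ) ≤ 2), Real.sqrt_nonneg 2]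
  have hgeo : ∑ k ∈ Finset.range K, (Real.sqrt 2 / 2) ^ k ≤ 4 := by
    have hsum : Summable (fun k : ℕ => (Real.sqrt 2 / 2) ^ k) :=
      summable_geometric_of_lt_one (by positivity) hhalf
    have h1 : ∑ k ∈ Finset.range K, (Real.sqrt 2 / 2) ^ k ≤
        ∑' k : ℕ, (Real.sqrt 2 / 2) ^ k :=
      Summable.sum_le_tsum _ (fun k _ => by positivity) hsum
    rw [tsum_geometric_of_lt_one (by positivity) hhalf] at h1
    refine h1.trans ?_
    have hs15 : Real.sqrt 2 ≤ 1.5 := by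
      nlinarith [Real.sq_sqrt (by norm_num : (0:ℝ) ≤ 2), Real.sqrt_nonneg 2]
    have hpos : (0:ℝ) < 1 - Real.sqrt 2 / 2 := by linarith
    rw [inv_le_comm₀ hpos (by norm_num : (0:ℝ) < 4)]
    linarith
  calc ∑ k ∈ Finset.range K, ((1:ℝ)/2) ^ k * ((1:ℝ) + k) ^ p
      ≤ ∑ k ∈ Finset.range K, ((1:ℝ)/2) ^ k * (t ^ p * Real.sqrt 2 * Real.sqrt 2 ^ k) := by
        refine Finset.sum_le_sum (fun k _ => ?_)
        exact mul_le_mul_of_nonneg_left (hbound k) (by positivity)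
    _ = t ^ p * Real.sqrt 2 * ∑ k ∈ Finset.range K, (Real.sqrt 2 / 2) ^ k := by
        rw [Finset.mul_sum]
        refine Finset.sum_congr rfl (fun k _ => ?_)
        have h2 : (Real.sqrt 2 / 2) ^ k = Real.sqrt 2 ^ k * (1/2:ℝ) ^ k := by
          rw [← mul_pow, mul_one_div]
        rw [h2]; ring
    _ ≤ t ^ p * Real.sqrt 2 * 4 :=
        mul_le_mul_of_nonneg_left hgeo (by positivity)

lemma myGeom : ∀ K : ℕ, ∑ k ∈ Finset.range K, ((1:ℝ)/2) ^ k ≤ 2 := by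
  intro K
  have hsum : Summable (fun k : ℕ => ((1:ℝ)/2) ^ k) :=
    summable_geometric_of_lt_one (by norm_num) (by norm_num)
  have h1 := Summable.sum_le_tsum (Finset.range K) (fun k _ => by positivity) hsum
  rw [tsum_geometric_of_lt_one (by norm_num) (by norm_num : (1:ℝ)/2 < 1)] at h1
  refine h1.trans ?_
  norm_num


set_option maxHeartbeats 1000000 in
theorem large_zeros_reciprocal_sum_bound (p B : ℝ) (hp : 1 ≤ p) (hB : 0 ≤ B) :
    ∃ A₂ : ℝ, 0 ≤ A₂ ∧
      ∀ f : ℂ → ℂ, Differentiable ℂ f → f 0 = 1 →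
        (∀ z : ℂ, ‖z‖ ≤ 1 → f z ≠ 0) →
        (∀ z : ℂ, 1 ≤ ‖z‖ →
          Real.log (‖f z‖) ≤ B + (Real.log (2 * ‖z‖ ^ 2)) ^ p) →
        ∀ m : ℂ → ℕ, (∀ w : ℂ, HasZeroOrder f w (m w)) →
        ∀ R : ℝ, 2 ≤ R →
          Summable (fun w : ℂ => if R ≤ ‖w‖ then (m w : ℝ) / ‖w‖ else 0) ∧
          (∑' w : ℂ, if R ≤ ‖w‖ then (m w : ℝ) / ‖w‖ else 0) ≤
            A₂ * (Real.log R) ^ p / R := by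
  classical
  have hp0 : (0:ℝ) < p := lt_of_lt_of_le one_pos hp
  have hlog2 : (0:ℝ) < Real.log 2 := Real.log_pos one_lt_two
  have hlog3 : (0:ℝ) < Real.log 3 := Real.log_pos (by norm_num)
  obtain ⟨D, hD0, hD⟩ := mySeries p hp
  refine ⟨(2*B/(Real.log 2) ^ p + (9:ℝ) ^ p * D) / Real.log 3, by positivity, ?_⟩
  intro f hf hf0 hnz hgrow m hm R hR2
  have hRpos : (0:ℝ) < R := by linarith
  have hlogR : Real.log 2 ≤ Real.log R := Real.log_le_log two_pos hR2
  have hlogRpos : (0:ℝ) < Real.log R := lt_of_lt_of_le hlog2 hlogR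
  set L : ℝ := (Real.log R) ^ p with hLdef
  have hL0 : 0 < L := Real.rpow_pos_of_pos hlogRpos p
  have hLc : (Real.log 2) ^ p ≤ L :=
    Real.rpow_le_rpow hlog2.le hlogR hp0.le
  set c : ℝ := (Real.log 2) ^ p with hcdef
  have hc0 : 0 < c := Real.rpow_pos_of_pos hlog2 p
  set A₂ : ℝ := (2*B/c + (9:ℝ) ^ p * D) / Real.log 3 with hA2def
  set F : ℂ → ℝ := fun w => if R ≤ ‖w‖ then (m w : ℝ) / ‖w‖ else 0
    with hFdef
  have hF0 : ∀ w, 0 ≤ F w := by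
    intro w
    by_cases h : R ≤ ‖w‖ <;> simp only [hFdef, h, if_true, if_false] <;> positivity
  have key : ∀ S : Finset ℂ, ∑ w ∈ S, F w ≤ A₂ * L / R := by
    intro S
    set T : Finset ℂ := S.filter (fun w => R ≤ ‖w‖ ∧ f w = 0) with hTdef
    have h1 : ∑ w ∈ S, F w = ∑ w ∈ T, (m w : ℝ) / ‖w‖ := by
      rw [hTdef, Finset.sum_filter]
      refine Finset.sum_congr rfl (fun w _ => ?_)
      by_cases hRw : R ≤ ‖w‖
      · by_cases hfw : f w = 0
        · simp [hFdef, hRw, hfw]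
        · have hmw : m w = 0 := zero_order_eq_zero (hm w) hfw
          simp [hFdef, hRw, hfw, hmw]
      · simp [hFdef, hRw]
    set κ : ℂ → ℕ := fun w => ⌊Real.logb 2 (‖w‖ / R)⌋₊ with hκdef
    set K : ℕ := T.sup κ + 1 with hKdef
    have hmap : ∀ w ∈ T, κ w ∈ Finset.range K := fun w hw =>
      Finset.mem_range.mpr (Nat.lt_succ_of_le (Finset.le_sup hw))
    have h2 : ∑ w ∈ T, (m w : ℝ) / ‖w‖ =
        ∑ k ∈ Finset.range K, ∑ w ∈ T.filter (fun w => κ w = k),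
          (m w : ℝ) / ‖w‖ :=
      (Finset.sum_fiberwise_of_maps_to hmap _).symm
    have hk : ∀ k ∈ Finset.range K,
        ∑ w ∈ T.filter (fun w => κ w = k), (m w : ℝ) / ‖w‖ ≤
          1/(Real.log 3 * R) * (((1:ℝ)/2) ^ k *
            (B + (9:ℝ) ^ p * ((1:ℝ)+k) ^ p * L)) := by
      intro k _
      set Tk : Finset ℂ := T.filter (fun w => κ w = k) with hTkdef
      set r : ℝ := 2 ^ (k+1) * R with hrdef
      have h2k1 : (1:ℝ) ≤ 2 ^ (k+1) := by
        simpa using pow_le_pow_left₀ (by norm_num : (0:ℝ) ≤ 1)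
          (by norm_num : (1:ℝ) ≤ 2) (k+1)
      have h2k0 : (0:ℝ) < 2 ^ k := by positivity
      have hr1 : (1:ℝ) ≤ r := by
        rw [hrdef]; nlinarith
      have hmem : ∀ w ∈ Tk, (f w = 0 ∧ ‖w‖ ≤ r) ∧
          (2:ℝ) ^ k * R ≤ ‖w‖ := by
        intro w hw
        obtain ⟨hwT, hwκ⟩ := Finset.mem_filter.mp hw
        obtain ⟨-, hwR, hwf⟩ := Finset.mem_filter.mp hwT
        have hx1 : (1:ℝ) ≤ ‖w‖ / R := (one_le_div hRpos).mpr hwR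
        have hxpos : (0:ℝ) < ‖w‖ / R := lt_of_lt_of_le one_pos hx1
        constructor
        · refine ⟨hwf, ?_⟩
          have hup : Real.logb 2 (‖w‖ / R) < (k:ℝ) + 1 := by
            have h := Nat.lt_floor_add_one (Real.logb 2 (‖w‖ / R))
            have hk' : ⌊Real.logb 2 (‖w‖ / R)⌋₊ = k := hwκ
            rw [hk'] at h
            exact_mod_cast h
          have := Real.rpow_lt_rpow_of_exponent_lt one_lt_two hup
          rw [Real.rpow_logb two_pos (by norm_num) hxpos] at this
          have h2 : (2:ℝ) ^ ((k:ℝ)+1) = 2 ^ (k+1) := by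
            rw [show ((k:ℝ)+1) = ((k+1:ℕ):ℝ) by push_cast; ring, Real.rpow_natCast]
          rw [h2] at this
          rw [hrdef]
          calc ‖w‖ = ‖w‖ / R * R := by field_simp
            _ ≤ 2 ^ (k+1) * R := by
                exact mul_le_mul_of_nonneg_right this.le hRpos.le
        · have hlow : (k:ℝ) ≤ Real.logb 2 (‖w‖ / R) := by
            have h := Nat.floor_le (Real.logb_nonneg one_lt_two hx1)
            have hk' : ⌊Real.logb 2 (‖w‖ / R)⌋₊ = k := hwκ
            rw [hk'] at h
            exact h
          have := Real.rpow_le_rpow_of_exponent_le one_le_two hlow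
          rw [Real.rpow_logb two_pos (by norm_num) hxpos, Real.rpow_natCast] at this
          calc (2:ℝ) ^ k * R ≤ ‖w‖ / R * R :=
                mul_le_mul_of_nonneg_right this hRpos.le
            _ = ‖w‖ := by field_simp
      have hgr' : ∀ z : ℂ, ‖z‖ = 4 * r →
          Real.log (‖f z‖) ≤ B + (Real.log (32 * r ^ 2)) ^ p := by
        intro z hz
        have h1z : (1:ℝ) ≤ ‖z‖ := by rw [hz]; nlinarith
        have h := hgrow z h1z
        have heq : 2 * ‖z‖ ^ 2 = 32 * r ^ 2 := by rw [hz]; ring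
        rwa [heq] at h
      have hcount := myCount p B hB hf hf0 hm Tk hr1 hgr' (fun w hw => (hmem w hw).1)
      -- bound the log term
      have h32r : (32:ℝ) * r ^ 2 = 2 ^ (2*k+7) * R ^ 2 := by
        rw [hrdef]; ring
      have hlogval : Real.log (32 * r ^ 2) = ((2*k+7:ℕ):ℝ) * Real.log 2
          + 2 * Real.log R := by
        rw [h32r, Real.log_mul (by positivity) (by positivity), Real.log_pow,
          Real.log_pow]
        push_cast; ring
      have h0le : (0:ℝ) ≤ Real.log (32 * r ^ 2) :=
        Real.log_nonneg (by nlinarith)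
      have hle9 : Real.log (32 * r ^ 2) ≤ 9 * ((1:ℝ)+k) * Real.log R := by
        rw [hlogval]
        have h1 : ((2*k+7:ℕ):ℝ) * Real.log 2 ≤ ((2*k+7:ℕ):ℝ) * Real.log R :=
          mul_le_mul_of_nonneg_left hlogR (by positivity)
        have h2 : ((2*k+7:ℕ):ℝ) = 2*(k:ℝ)+7 := by push_cast; ring
        rw [h2] at h1 ⊢
        nlinarith [hlogRpos, (Nat.cast_nonneg k : (0:ℝ) ≤ k)]
      have hrp : (Real.log (32 * r ^ 2)) ^ p ≤ (9:ℝ) ^ p * ((1:ℝ)+k) ^ p * L := by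
        calc (Real.log (32 * r ^ 2)) ^ p ≤ (9 * ((1:ℝ)+k) * Real.log R) ^ p :=
              Real.rpow_le_rpow h0le hle9 hp0.le
          _ = (9:ℝ) ^ p * ((1:ℝ)+k) ^ p * L := by
              rw [Real.mul_rpow (by positivity) hlogRpos.le,
                Real.mul_rpow (by norm_num) (by positivity)]
      -- sum of multiplicities bound
      have hsum_m : ∑ w ∈ Tk, (m w : ℝ) ≤
          (B + (9:ℝ) ^ p * ((1:ℝ)+k) ^ p * L) / Real.log 3 := by
        rw [le_div_iff₀ hlog3]
        calc (∑ w ∈ Tk, (m w : ℝ)) * Real.log 3 ≤ B + (Real.log (32 * r ^ 2)) ^ p :=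
              hcount
          _ ≤ B + (9:ℝ) ^ p * ((1:ℝ)+k) ^ p * L := by linarith
      -- fiber sum bound
      have hfiber : ∑ w ∈ Tk, (m w : ℝ) / ‖w‖ ≤
          (∑ w ∈ Tk, (m w : ℝ)) / (2 ^ k * R) := by
        rw [Finset.sum_div]
        refine Finset.sum_le_sum (fun w hw => ?_)
        have hlow := (hmem w hw).2
        gcongr
      have hBY0 : (0:ℝ) ≤ B + (9:ℝ) ^ p * ((1:ℝ)+k) ^ p * L := by positivity
      calc ∑ w ∈ Tk, (m w : ℝ) / ‖w‖
          ≤ (∑ w ∈ Tk, (m w : ℝ)) / (2 ^ k * R) := hfiber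
        _ ≤ ((B + (9:ℝ) ^ p * ((1:ℝ)+k) ^ p * L) / Real.log 3) / (2 ^ k * R) := by
            gcongr
        _ = 1/(Real.log 3 * R) * (((1:ℝ)/2) ^ k *
            (B + (9:ℝ) ^ p * ((1:ℝ)+k) ^ p * L)) := by
            rw [one_div_pow]; ring
    -- combine over k
    have h3 : ∑ k ∈ Finset.range K, ∑ w ∈ T.filter (fun w => κ w = k),
        (m w : ℝ) / ‖w‖ ≤
        1/(Real.log 3 * R) * (2*B + (9:ℝ) ^ p * L * D) := by
      calc ∑ k ∈ Finset.range K, ∑ w ∈ T.filter (fun w => κ w = k),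
            (m w : ℝ) / ‖w‖
          ≤ ∑ k ∈ Finset.range K, 1/(Real.log 3 * R) * (((1:ℝ)/2) ^ k *
              (B + (9:ℝ) ^ p * ((1:ℝ)+k) ^ p * L)) := Finset.sum_le_sum hk
        _ = 1/(Real.log 3 * R) * ∑ k ∈ Finset.range K, (((1:ℝ)/2) ^ k *
              (B + (9:ℝ) ^ p * ((1:ℝ)+k) ^ p * L)) := by rw [Finset.mul_sum]
        _ ≤ 1/(Real.log 3 * R) * (2*B + (9:ℝ) ^ p * L * D) := by
            refine mul_le_mul_of_nonneg_left ?_ (by positivity)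
            have hsplit : ∀ k : ℕ, ((1:ℝ)/2) ^ k *
                (B + (9:ℝ) ^ p * ((1:ℝ)+k) ^ p * L) =
                B * ((1:ℝ)/2) ^ k + ((9:ℝ) ^ p * L) *
                  (((1:ℝ)/2) ^ k * ((1:ℝ)+k) ^ p) := fun k => by ring
            calc ∑ k ∈ Finset.range K, (((1:ℝ)/2) ^ k *
                  (B + (9:ℝ) ^ p * ((1:ℝ)+k) ^ p * L))
                = B * ∑ k ∈ Finset.range K, ((1:ℝ)/2) ^ k
                  + ((9:ℝ) ^ p * L) * ∑ k ∈ Finset.range K,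
                    (((1:ℝ)/2) ^ k * ((1:ℝ)+k) ^ p) := by
                  rw [Finset.mul_sum, Finset.mul_sum, ← Finset.sum_add_distrib]
                  exact Finset.sum_congr rfl (fun k _ => hsplit k)
              _ ≤ B * 2 + ((9:ℝ) ^ p * L) * D := by
                  refine add_le_add ?_ ?_
                  · exact mul_le_mul_of_nonneg_left (myGeom K) hB
                  · exact mul_le_mul_of_nonneg_left (hD K) (by positivity)
              _ = 2*B + (9:ℝ) ^ p * L * D := by ring
    -- final arithmetic
    rw [h1, h2]
    refine h3.trans ?_
    have hfin : 2*B + (9:ℝ) ^ p * L * D ≤ (2*B/c + (9:ℝ) ^ p * D) * L := by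
      have h1' : 2*B ≤ 2*B/c * L := by
        rw [div_mul_eq_mul_div, le_div_iff₀ hc0]
        nlinarith
      nlinarith [hL0]
    calc 1/(Real.log 3 * R) * (2*B + (9:ℝ) ^ p * L * D)
        ≤ 1/(Real.log 3 * R) * ((2*B/c + (9:ℝ) ^ p * D) * L) :=
          mul_le_mul_of_nonneg_left hfin (by positivity)
      _ = A₂ * L / R := by
          rw [hA2def]; ring
  have hsummable : Summable F := summable_of_sum_le hF0 key
  exact ⟨hsummable, Summable.tsum_le_of_sum_le hsummable key⟩
end

section
/- Let z ∈ ℂ with |z| = 1, and let (z_n)_{n≥1} and (z̆_n)_{n≥1} be sequences of complex numbers with |z_n| ≥ 2 and |z̆_n| ≥ 2 for all n, and with Σ_{n=1}^∞ 1/|z_n| < ∞ and Σ_{n=1}^∞ 1/|z̆_n| < ∞. Then the infinite product ∏_{n=1}^∞ (1 − z/z̆_n)/(1 − z/z_n) converges and exp(−s) ≤ ∏_{n=1}^∞ |(1 − z/z̆_n)/(1 − z/z_n)| ≤ exp(s), where s = 2·Σ_{n=1}^∞ (1/|z̆_n| + 1/|z_n|). -/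
open Complex Filter
open scoped ComplexConjugate Topology

lemma my_log_div {u v : ℂ} (hu : 0 < u.re) (hv : 0 < v.re) :
    Complex.log (u / v) = Complex.log u - Complex.log v := by
  have hu0 : u ≠ 0 := fun h => by simp [h] at hu
  have hv0 : v ≠ 0 := fun h => by simp [h] at hv
  have hargv : v.arg ≠ Real.pi := by
    intro h
    have := Complex.arg_eq_pi_iff.mp h
    linarith [this.1]
  have hau : |u.arg| < Real.pi / 2 := Complex.abs_arg_lt_pi_div_two_iff.mpr (Or.inl hu)
  have hav : |v.arg| < Real.pi / 2 := Complex.abs_arg_lt_pi_div_two_iff.mpr (Or.inl hv)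
  have hargvinv : (v⁻¹).arg = -v.arg := by rw [Complex.arg_inv, if_neg hargv]
  rw [div_eq_mul_inv, Complex.log_mul hu0 (inv_ne_zero hv0), Complex.log_inv v hargv,
    sub_eq_add_neg]
  rw [hargvinv]
  constructor
  · rw [abs_lt] at hau hav; linarith [Real.pi_pos]
  · rw [abs_lt] at hau hav; linarith [Real.pi_pos]

theorem large_resonance_product_estimate (z : ℂ) (hz : ‖z‖ = 1)
    (zs bzs : ℕ → ℂ)
    (hzs : ∀ n, 2 ≤ ‖zs n‖) (hbzs : ∀ n, 2 ≤ ‖bzs n‖)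
    (hsum : Summable (fun n : ℕ => (‖zs n‖)⁻¹))
    (hbsum : Summable (fun n : ℕ => (‖bzs n‖)⁻¹)) :
    Multipliable (fun n : ℕ => (1 - z / bzs n) / (1 - z / zs n)) ∧
    Real.exp (-(2 * ∑' n : ℕ, ((‖bzs n‖)⁻¹ + (‖zs n‖)⁻¹))) ≤
      ‖∏' n : ℕ, (1 - z / bzs n) / (1 - z / zs n)‖ ∧
    ‖∏' n : ℕ, (1 - z / bzs n) / (1 - z / zs n)‖ ≤
      Real.exp (2 * ∑' n : ℕ, ((‖bzs n‖)⁻¹ + (‖zs n‖)⁻¹)) := by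
  set a : ℕ → ℝ := fun n => (‖bzs n‖)⁻¹ with ha
  set b : ℕ → ℝ := fun n => (‖zs n‖)⁻¹ with hb
  set f : ℕ → ℂ := fun n => (1 - z / bzs n) / (1 - z / zs n) with hf
  -- basic per-n facts
  have habsb : ∀ n, ‖z / bzs n‖ = a n := by
    intro n
    rw [norm_div, hz, ha, one_div]
  have habsz : ∀ n, ‖z / zs n‖ = b n := by
    intro n
    rw [norm_div, hz, hb, one_div]
  have ha_half : ∀ n, a n ≤ 1 / 2 := fun n => by
    have h2 := hbzs n
    have : (0:ℝ) < 2 := by norm_num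
    simpa [ha] using inv_anti₀ this h2
  have hb_half : ∀ n, b n ≤ 1 / 2 := fun n => by
    have h2 := hzs n
    have : (0:ℝ) < 2 := by norm_num
    simpa [hb] using inv_anti₀ this h2
  have ha_nonneg : ∀ n, 0 ≤ a n := fun n => inv_nonneg.mpr (norm_nonneg _)
  have hb_nonneg : ∀ n, 0 ≤ b n := fun n => inv_nonneg.mpr (norm_nonneg _)
  have hre_u : ∀ n, 0 < (1 - z / bzs n).re := by
    intro n
    have h1 : (z / bzs n).re ≤ ‖z / bzs n‖ := Complex.re_le_norm _
    rw [habsb] at h1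
    have := ha_half n
    simp only [Complex.sub_re, Complex.one_re]
    linarith
  have hre_v : ∀ n, 0 < (1 - z / zs n).re := by
    intro n
    have h1 : (z / zs n).re ≤ ‖z / zs n‖ := Complex.re_le_norm _
    rw [habsz] at h1
    have := hb_half n
    simp only [Complex.sub_re, Complex.one_re]
    linarith
  have hf_ne : ∀ n, f n ≠ 0 := by
    intro n
    apply div_ne_zero <;> intro h
    · exact absurd (by rw [h]; simp) (hre_u n).ne'
    · exact absurd (by rw [h]; simp) (hre_v n).ne'
  have hlog_u : ∀ n, ‖Complex.log (1 - z / bzs n)‖ ≤ 3 / 2 * a n := by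
    intro n
    have h : ‖-(z / bzs n)‖ ≤ 1 / 2 := by
      rw [norm_neg, habsb]; exact ha_half n
    have := Complex.norm_log_one_add_half_le_self h
    have h2 : ‖z / bzs n‖ = a n := by exact habsb n
    rw [norm_neg, h2] at this
    rw [sub_eq_add_neg]
    exact this
  have hlog_v : ∀ n, ‖Complex.log (1 - z / zs n)‖ ≤ 3 / 2 * b n := by
    intro n
    have h : ‖-(z / zs n)‖ ≤ 1 / 2 := by
      rw [norm_neg, habsz]; exact hb_half n
    have := Complex.norm_log_one_add_half_le_self h
    have h2 : ‖z / zs n‖ = b n := by exact habsz n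
    rw [norm_neg, h2] at this
    rw [sub_eq_add_neg]
    exact this
  have hlog_eq : ∀ n, Complex.log (f n) =
      Complex.log (1 - z / bzs n) - Complex.log (1 - z / zs n) :=
    fun n => my_log_div (hre_u n) (hre_v n)
  have hlog_bound : ∀ n, ‖Complex.log (f n)‖ ≤ 2 * (a n + b n) := by
    intro n
    rw [hlog_eq n]
    calc ‖Complex.log (1 - z / bzs n) - Complex.log (1 - z / zs n)‖
        ≤ ‖Complex.log (1 - z / bzs n)‖ + ‖Complex.log (1 - z / zs n)‖ := norm_sub_le _ _
      _ ≤ 3 / 2 * a n + 3 / 2 * b n := add_le_add (hlog_u n) (hlog_v n)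
      _ ≤ 2 * (a n + b n) := by nlinarith [ha_nonneg n, hb_nonneg n]
  have hab_sum : Summable (fun n => a n + b n) := hbsum.add hsum
  have hbound_sum : Summable (fun n => 2 * (a n + b n)) := hab_sum.mul_left 2
  have hlogsum : Summable (fun n => Complex.log (f n)) :=
    Summable.of_norm_bounded hbound_sum hlog_bound
  -- multipliable and product formula
  have hprod : HasProd f (Complex.exp (∑' n, Complex.log (f n))) := by
    exact Complex.hasProd_of_hasSum_log hf_ne hlogsum.hasSum
  have hmult : Multipliable f := ⟨_, hprod⟩
  have htprod : ∏' n, f n = Complex.exp (∑' n, Complex.log (f n)) := hprod.tprod_eq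
  -- real part estimates
  have hre_summable : Summable (fun n => (Complex.log (f n)).re) := by
    apply Summable.of_norm_bounded hbound_sum
    intro n
    exact le_trans (Complex.abs_re_le_norm _) (hlog_bound n)
  have hre_eq : (∑' n, Complex.log (f n)).re = ∑' n, (Complex.log (f n)).re :=
    Complex.re_tsum hlogsum
  have hS : ∑' n, 2 * (a n + b n) = 2 * ∑' n, (a n + b n) := tsum_mul_left
  have hupper : ∑' n, (Complex.log (f n)).re ≤ 2 * ∑' n, (a n + b n) := by
    rw [← hS]
    refine Summable.tsum_le_tsum (fun n => ?_) hre_summable hbound_sum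
    exact le_trans (Complex.re_le_norm _) (hlog_bound n)
  have hlower : -(2 * ∑' n, (a n + b n)) ≤ ∑' n, (Complex.log (f n)).re := by
    rw [← hS, ← tsum_neg]
    refine Summable.tsum_le_tsum (fun n => ?_) hbound_sum.neg hre_summable
    have h1 : |(Complex.log (f n)).re| ≤ 2 * (a n + b n) :=
      le_trans (Complex.abs_re_le_norm _) (hlog_bound n)
    rw [abs_le] at h1
    exact h1.1
  have habs : ‖∏' n, f n‖ = Real.exp ((∑' n, Complex.log (f n)).re) := by
    rw [htprod, Complex.norm_exp]
  refine ⟨hmult, ?_, ?_⟩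
  · rw [habs, hre_eq]
    exact Real.exp_le_exp.mpr hlower
  · rw [habs, hre_eq]
    exact Real.exp_le_exp.mpr hupper
end

section
/- Let Q ≥ 1 and let w, w̆, z, z̆ ∈ ℂ satisfy |w| ≤ 1 − 1/Q, |w̆| ≤ 1 − 1/Q, |z| ≤ 1 and |z̆| ≤ 1. Then |S(w,z) − S(w̆,z̆)| ≤ Q²·(4|w − w̆| + 2|z − z̆|), where S(w,z) = (z + conj(w))/(1 + wz). -/
open Complex Filter
open scoped ComplexConjugate Topology

theorem moebius_transform_lipschitz (Q : ℝ) (hQ : 1 ≤ Q) (w w' z z' : ℂ)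
    (hw : ‖w‖ ≤ 1 - 1 / Q) (hw' : ‖w'‖ ≤ 1 - 1 / Q)
    (hz : ‖z‖ ≤ 1) (hz' : ‖z'‖ ≤ 1) :
    ‖(z + conj w) / (1 + w * z) - (z' + conj w') / (1 + w' * z')‖ ≤
      Q ^ 2 * (4 * ‖w - w'‖ + 2 * ‖z - z'‖) := by
  have hQ0 : (0:ℝ) < Q := lt_of_lt_of_le one_pos hQ
  have hQi : (0:ℝ) < Q⁻¹ := by positivity
  have h1Q : 1 - 1/Q ≤ 1 := by
    have : 0 ≤ 1/Q := by positivity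
    linarith
  have hw1 : ‖w‖ ≤ 1 := hw.trans h1Q
  have hw'1 : ‖w'‖ ≤ 1 := hw'.trans h1Q
  have key : ∀ u v : ℂ, ‖u‖ ≤ 1 - 1/Q → ‖v‖ ≤ 1 →
      Q⁻¹ ≤ ‖1 + u * v‖ := by
    intro u v hu hv
    have h1 : ‖u * v‖ ≤ 1 - 1/Q := by
      rw [norm_mul]
      calc ‖u‖ * ‖v‖ ≤ (1 - 1/Q) * 1 :=
            mul_le_mul hu hv (norm_nonneg v) (by linarith [hu, norm_nonneg u])
        _ = 1 - 1/Q := by ring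
    have h2 : (1:ℝ) ≤ ‖1 + u * v‖ + ‖u * v‖ := by
      have := norm_add_le (1 + u * v) (-(u * v))
      simpa using this
    have : 1/Q = Q⁻¹ := one_div Q
    linarith
  have hb : Q⁻¹ ≤ ‖1 + w * z‖ := key w z hw hz
  have hd : Q⁻¹ ≤ ‖1 + w' * z'‖ := key w' z' hw' hz'
  have hbne : (1 + w * z) ≠ 0 := by
    intro h; rw [h] at hb; simp at hb; linarith
  have hdne : (1 + w' * z') ≠ 0 := by
    intro h; rw [h] at hd; simp at hd; linarith
  rw [div_sub_div _ _ hbne hdne, norm_div, norm_mul]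
  set M : ℝ := 4 * ‖w - w'‖ + 2 * ‖z - z'‖ with hM
  have hNum : ‖(z + conj w) * (1 + w' * z') - (1 + w * z) * (z' + conj w')‖ ≤ M := by
    have hexp : (z + conj w) * (1 + w' * z') - (1 + w * z) * (z' + conj w') =
        ((z - z') + (conj w - conj w')) + ((z * z' * (w' - w) + conj w * z' * (w' - w)) +
          (w * z' * (conj w - conj w') + conj w' * w * (z' - z))) := by ring
    rw [hexp]
    have hconj : ‖conj w - conj w'‖ = ‖w - w'‖ := by
      rw [← map_sub]; exact Complex.norm_conj _
    have hcw : ‖conj w‖ = ‖w‖ := Complex.norm_conj w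
    have hcw' : ‖conj w'‖ = ‖w'‖ := Complex.norm_conj w'
    have t1 : ‖(z - z') + (conj w - conj w')‖ ≤
        ‖z - z'‖ + ‖w - w'‖ := by
      refine (norm_add_le _ _).trans ?_
      rw [hconj]
    have aux : ∀ a b : ℂ, ‖a‖ ≤ 1 → ‖b‖ ≤ 1 → ∀ c : ℂ,
        ‖a * b * c‖ ≤ ‖c‖ := by
      intro a b ha hb c
      rw [norm_mul, norm_mul]
      calc ‖a‖ * ‖b‖ * ‖c‖
          ≤ 1 * 1 * ‖c‖ := by
            apply mul_le_mul _ le_rfl (norm_nonneg c) (by norm_num)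
            exact mul_le_mul ha hb (norm_nonneg b) (by norm_num)
        _ = ‖c‖ := by ring
    have t2 : ‖z * z' * (w' - w)‖ ≤ ‖w - w'‖ := by
      have := aux z z' hz hz' (w' - w)
      rwa [norm_sub_rev w' w] at this
    have t3 : ‖conj w * z' * (w' - w)‖ ≤ ‖w - w'‖ := by
      have := aux (conj w) z' (by rw [hcw]; exact hw1) hz' (w' - w)
      rwa [norm_sub_rev w' w] at this
    have t4 : ‖w * z' * (conj w - conj w')‖ ≤ ‖w - w'‖ := by
      have := aux w z' hw1 hz' (conj w - conj w')
      rwa [hconj] at this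
    have t5 : ‖conj w' * w * (z' - z)‖ ≤ ‖z - z'‖ := by
      have := aux (conj w') w (by rw [hcw']; exact hw'1) hw1 (z' - z)
      rwa [norm_sub_rev z' z] at this
    calc ‖_‖ ≤ ‖(z - z') + (conj w - conj w')‖ +
          ‖(z * z' * (w' - w) + conj w * z' * (w' - w)) +
            (w * z' * (conj w - conj w') + conj w' * w * (z' - z))‖ := norm_add_le _ _
      _ ≤ ‖(z - z') + (conj w - conj w')‖ +
          ((‖z * z' * (w' - w)‖ + ‖conj w * z' * (w' - w)‖) +
            (‖w * z' * (conj w - conj w')‖ + ‖conj w' * w * (z' - z)‖)) := by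
          gcongr
          exact (norm_add_le _ _).trans (by gcongr <;> exact norm_add_le _ _)
      _ ≤ M := by rw [hM]; linarith
  have hM0 : 0 ≤ M := by
    rw [hM]; positivity
  calc ‖(z + conj w) * (1 + w' * z') - (1 + w * z) * (z' + conj w')‖ /
        (‖1 + w * z‖ * ‖1 + w' * z'‖)
      ≤ M / (Q⁻¹ * Q⁻¹) := by
        apply div_le_div₀ hM0 hNum (by positivity)
        exact mul_le_mul hb hd (le_of_lt hQi) (norm_nonneg _)
    _ = Q ^ 2 * M := by field_simp
end

section
/- Let z ∈ ℂ with |z| ≤ 1, let (α_k)_{k≥1} be a sequence of complex numbers with |α_k| < 1 for all k and Σ_{k=1}^∞ |α_k| < ∞, and let (w_k)_{k≥0} be a sequence of complex numbers with |w_k| < 1 for all k, satisfying the Schur recursion z·w_k = (w_{k−1} + conj(α_k))/(1 + α_k·w_{k−1}) for all k ≥ 1, and such that w_k → 0 as k → ∞. Then (1 + |w_0|)/(1 − |w_0|) ≤ ∏_{k=1}^∞ (1 + |α_k|)/(1 − |α_k|), where the infinite product converges by the summability of |α_k|. -/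
open Complex Filter
open scoped ComplexConjugate Topology

private lemma phi_mono_aux {x y : ℝ} (hx : 0 ≤ x) (hxy : x ≤ y) (hy : y < 1) :
    (1 + x) / (1 - x) ≤ (1 + y) / (1 - y) := by
  have h1 : 0 < 1 - x := by linarith
  have h2 : 0 < 1 - y := by linarith
  rw [div_le_div_iff₀ h1 h2]
  nlinarith

private lemma key_ineq {a c r : ℝ} (ha : 0 ≤ a) (ha1 : a < 1) (hc : 0 ≤ c) (hc1 : c < 1)
    (hr : 0 ≤ r) (h : r ≤ (a + c) / (1 + a * c)) :
    (1 + r) / (1 - r) ≤ (1 + c) / (1 - c) * ((1 + a) / (1 - a)) := by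
  have hac : 0 < 1 + a * c := by nlinarith
  have hq0 : 0 ≤ (a + c) / (1 + a * c) := div_nonneg (by linarith) hac.le
  have hq1 : (a + c) / (1 + a * c) < 1 := by
    rw [div_lt_one hac]; nlinarith
  have h1 := phi_mono_aux hr h hq1
  have hr' : r * (1 + a * c) ≤ a + c := (le_div_iff₀ hac).mp h
  have hr1 : r < 1 := lt_of_le_of_lt h hq1
  rw [div_mul_div_comm, div_le_div_iff₀ (by linarith) (by nlinarith)]
  nlinarith

private lemma mobius_bound (v b : ℂ) (hv : ‖v‖ < 1) (hb : ‖b‖ < 1) :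
    ‖(v - b) / (1 - conj b * v)‖ ≤
      (‖v‖ + ‖b‖) / (1 + ‖v‖ * ‖b‖) := by
  set a := ‖v‖ with ha
  set c := ‖b‖ with hc
  have ha0 : 0 ≤ a := norm_nonneg v
  have hc0 : 0 ≤ c := norm_nonneg b
  have habs : ‖conj b * v‖ = c * a := by
    rw [norm_mul, Complex.norm_conj]
  have hden : (1 : ℂ) - conj b * v ≠ 0 := by
    intro h
    have : conj b * v = 1 := by linear_combination -h
    have := congrArg (fun x : ℂ => ‖x‖) this
    rw [habs, norm_one] at this
    nlinarith
  have hdpos : 0 < ‖1 - conj b * v‖ := by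
    simpa [norm_pos_iff] using hden
  rw [norm_div, div_le_div_iff₀ hdpos (by nlinarith)]
  have hsq : (‖v - b‖ * (1 + a * c)) ^ 2 ≤
      ((a + c) * ‖1 - conj b * v‖) ^ 2 := by
    have e1 : ‖v - b‖ ^ 2 = a ^ 2 + c ^ 2 - 2 * (v * conj b).re := by
      rw [Complex.sq_norm, Complex.normSq_sub]
      simp [Complex.normSq_eq_norm_sq, ha, hc]
    have e2 : ‖1 - conj b * v‖ ^ 2 = 1 + a ^ 2 * c ^ 2 - 2 * (v * conj b).re := by
      rw [Complex.sq_norm, Complex.normSq_sub]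
      simp [Complex.normSq_mul, Complex.normSq_conj, Complex.normSq_eq_norm_sq, mul_comm]
      ring
    have ht : |(v * conj b).re| ≤ a * c := by
      calc |(v * conj b).re| ≤ ‖v * conj b‖ := Complex.abs_re_le_norm _
        _ = a * c := by rw [norm_mul, Complex.norm_conj]
    have ht1 : (v * conj b).re ≤ a * c := le_of_abs_le ht
    have ht2 : -(a * c) ≤ (v * conj b).re := neg_le_of_abs_le ht
    rw [mul_pow, mul_pow, e1, e2]
    nlinarith [mul_nonneg (mul_nonneg (by nlinarith : (0:ℝ) ≤ 1 - a^2) (by nlinarith : (0:ℝ) ≤ 1 - c^2)) (by linarith : (0:ℝ) ≤ a * c + (v * conj b).re)]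
  have h1 : 0 ≤ ‖v - b‖ * (1 + a * c) := by positivity
  have h2 : 0 ≤ (a + c) * ‖1 - conj b * v‖ := by positivity
  exact (pow_le_pow_iff_left₀ h1 h2 (by norm_num)).mp hsq

set_option maxHeartbeats 1000000 in
theorem schur_recursion_estimate (z : ℂ) (hz : ‖z‖ ≤ 1)
    (α : ℕ → ℂ) (hα1 : ∀ k : ℕ, 1 ≤ k → ‖α k‖ < 1)
    (hsum : Summable (fun k : ℕ => ‖α (k + 1)‖))
    (w : ℕ → ℂ) (hw : ∀ k : ℕ, ‖w k‖ < 1)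
    (hrec : ∀ k : ℕ, 1 ≤ k →
      z * w k = (w (k - 1) + conj (α k)) / (1 + α k * w (k - 1)))
    (hlim : Filter.Tendsto w Filter.atTop (nhds 0)) :
    (1 + ‖w 0‖) / (1 - ‖w 0‖) ≤
      ∏' k : ℕ, (1 + ‖α (k + 1)‖) / (1 - ‖α (k + 1)‖) := by
  set f : ℕ → ℝ := fun k => (1 + ‖α (k + 1)‖) / (1 - ‖α (k + 1)‖) with hf
  set φ : ℕ → ℝ := fun k => (1 + ‖w k‖) / (1 - ‖w k‖) with hφ
  have hαk : ∀ k : ℕ, ‖α (k + 1)‖ < 1 := fun k => hα1 (k + 1) (Nat.le_add_left 1 k)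
  have hf1 : ∀ k, (1 : ℝ) ≤ f k := by
    intro k
    have h := hαk k
    have h0 := norm_nonneg (α (k + 1))
    rw [hf, le_div_iff₀ (by linarith)]
    linarith
  -- step estimate
  have step : ∀ n : ℕ, φ n ≤ f n * φ (n + 1) := by
    intro n
    have hrn := hrec (n + 1) (Nat.le_add_left 1 n)
    simp only [Nat.add_sub_cancel] at hrn
    set b : ℂ := conj (α (n + 1)) with hb
    set v : ℂ := z * w (n + 1) with hv
    have hcb : conj b = α (n + 1) := by rw [hb, Complex.conj_conj]
    have habsb : ‖b‖ = ‖α (n + 1)‖ := Complex.norm_conj _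
    have hbv : ‖b‖ < 1 := by rw [habsb]; exact hαk n
    have hvlt : ‖v‖ < 1 := by
      rw [hv, norm_mul]
      calc ‖z‖ * ‖w (n + 1)‖ ≤ 1 * ‖w (n + 1)‖ :=
        mul_le_mul_of_nonneg_right hz (norm_nonneg _)
      _ < 1 := by rw [one_mul]; exact hw (n + 1)
    have hden1 : (1 : ℂ) + α (n + 1) * w n ≠ 0 := by
      intro h
      have h2 : α (n + 1) * w n = -1 := by linear_combination h
      have h3 : ‖α (n + 1)‖ * ‖w n‖ = 1 := by
        rw [← norm_mul, h2]; simp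
      nlinarith [hαk n, hw n, norm_nonneg (α (n + 1)), norm_nonneg (w n)]
    have hmul : v * (1 + conj b * w n) = w n + b := by
      rw [eq_div_iff hden1] at hrn
      rw [hcb]
      linear_combination hrn
    have hden2 : (1 : ℂ) - conj b * v ≠ 0 := by
      intro h
      have h2 : conj b * v = 1 := by linear_combination -h
      have := congrArg (fun x : ℂ => ‖x‖) h2
      rw [norm_mul, Complex.norm_conj, norm_one] at this
      nlinarith [norm_nonneg b, norm_nonneg v]
    have hwn : w n = (v - b) / (1 - conj b * v) := by
      rw [eq_div_iff hden2]
      linear_combination -hmul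
    have hbound : ‖w n‖ ≤
        (‖v‖ + ‖b‖) / (1 + ‖v‖ * ‖b‖) := by
      rw [hwn, ]
      exact mobius_bound v b hvlt hbv
    -- monotonicity in first argument: abs v ≤ abs (w (n+1))
    have hva : ‖v‖ ≤ ‖w (n + 1)‖ := by
      rw [hv, norm_mul]
      calc ‖z‖ * ‖w (n + 1)‖ ≤ 1 * ‖w (n + 1)‖ :=
        mul_le_mul_of_nonneg_right hz (norm_nonneg _)
      _ = _ := one_mul _
    have hmono : (‖v‖ + ‖b‖) / (1 + ‖v‖ * ‖b‖) ≤
        (‖w (n + 1)‖ + ‖b‖) / (1 + ‖w (n + 1)‖ * ‖b‖) := by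
      set a1 := ‖v‖
      set a2 := ‖w (n + 1)‖
      set c := ‖b‖
      have ha1 : 0 ≤ a1 := norm_nonneg _
      have hc0 : 0 ≤ c := norm_nonneg _
      have hc1 : c < 1 := hbv
      rw [div_le_div_iff₀ (by nlinarith) (by nlinarith [hw (n+1), norm_nonneg (w (n+1))])]
      nlinarith [mul_nonneg (sub_nonneg.2 hva) (by nlinarith : (0:ℝ) ≤ 1 - c ^ 2)]
    have := key_ineq (norm_nonneg (w (n + 1))) (hw (n + 1))
      (norm_nonneg b) hbv (norm_nonneg (w n)) (hbound.trans hmono)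
    rw [habsb] at this
    exact this
  -- telescoping
  have tele : ∀ n : ℕ, φ 0 ≤ (∏ i ∈ Finset.range n, f i) * φ n := by
    intro n
    induction n with
    | zero => simp
    | succ n ih =>
      have hφpos : 0 ≤ φ (n + 1) :=
        div_nonneg (by positivity) (by linarith [hw (n + 1)])
      have hppos : (0 : ℝ) ≤ ∏ i ∈ Finset.range n, f i :=
        Finset.prod_nonneg fun i _ => le_trans zero_le_one (hf1 i)
      calc φ 0 ≤ (∏ i ∈ Finset.range n, f i) * φ n := ih
        _ ≤ (∏ i ∈ Finset.range n, f i) * (f n * φ (n + 1)) :=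
          mul_le_mul_of_nonneg_left (step n) hppos
        _ = (∏ i ∈ Finset.range (n + 1), f i) * φ (n + 1) := by
          rw [Finset.prod_range_succ]; ring
  -- multipliability
  have habs0 : Tendsto (fun k => ‖α (k + 1)‖) atTop (𝓝 0) :=
    hsum.tendsto_atTop_zero
  have hev : ∀ᶠ k in atTop, ‖α (k + 1)‖ ≤ 1 / 2 :=
    habs0.eventually (ge_mem_nhds (by norm_num))
  have hlog_sum : Summable fun k => Real.log (f k) := by
    apply summable_of_isBigO_nat hsum
    apply Asymptotics.IsBigO.of_bound 4
    filter_upwards [hev] with k hk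
    have ha0 := norm_nonneg (α (k + 1))
    set a := ‖α (k + 1)‖ with haa
    have hfk : (1 : ℝ) ≤ f k := hf1 k
    have hfpos : (0 : ℝ) < f k := lt_of_lt_of_le zero_lt_one hfk
    have hlog0 : 0 ≤ Real.log (f k) := Real.log_nonneg hfk
    have hub : Real.log (f k) ≤ 4 * a := by
      have h1 : Real.log (f k) ≤ f k - 1 := Real.log_le_sub_one_of_pos hfpos
      have h2 : f k - 1 ≤ 4 * a := by
        rw [hf]
        rw [div_sub' (by linarith : (1 : ℝ) - a ≠ 0)]
        rw [div_le_iff₀ (by linarith)]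
        nlinarith
      linarith
    rw [Real.norm_eq_abs, Real.norm_eq_abs, _root_.abs_of_nonneg hlog0, _root_.abs_of_nonneg ha0]
    linarith
  have hmult : Multipliable f := by
    have := Real.multipliable_of_summable_log
      (fun k => lt_of_lt_of_le zero_lt_one (hf1 k)) hlog_sum
    exact this
  have hprodlim : Tendsto (fun n => ∏ i ∈ Finset.range n, f i) atTop (𝓝 (∏' k, f k)) :=
    hmult.hasProd.tendsto_prod_nat
  -- limit of φ
  have hφlim : Tendsto φ atTop (𝓝 1) := by
    have h1 : Tendsto (fun n => ‖w n‖) atTop (𝓝 0) := by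
      have := (continuous_norm.tendsto 0).comp hlim
      simpa using (by exact this : Tendsto (fun n => ‖w n‖) atTop (𝓝 ‖(0:ℂ)‖))
    have h2 : Tendsto (fun n => (1 + ‖w n‖) / (1 - ‖w n‖)) atTop
        (𝓝 ((1 + 0) / (1 - 0))) := by
      apply Tendsto.div
      · exact tendsto_const_nhds.add h1
      · exact tendsto_const_nhds.sub h1
      · norm_num
    rw [hφ]
    simpa using h2
  have hfinal : Tendsto (fun n => (∏ i ∈ Finset.range n, f i) * φ n) atTop
      (𝓝 (∏' k, f k)) := by
    have := hprodlim.mul hφlim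
    simpa using this
  exact ge_of_tendsto hfinal (Eventually.of_forall tele)
end
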